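/- In the same setting, for any significance level ε ∈ (0,1): E[|Γ^ε(x)|] = E[|Γ^ε(x) \ {y_true}|] + (1 − ε), where Γ^ε(x) = {y : p(x,y) > ε}. Hence a conformity measure is N-optimal (minimizes expected prediction-set size at every level) if and only if it is OE-optimal (minimizes the expected number of false labels in the prediction set at every level). -/

import Mathlib

open MeasureTheory

lemma key_aux {Ω Y : Type*} [MeasurableSpace Ω] [Fintype Y] [DecidableEq Y]
    (μ : Measure Ω) [IsProbabilityMeasure μ]
    (ytrue : Ω → Y) (p : Ω → Y → ℝ)
    (hunif : Measure.map (fun ω => p ω (ytrue ω)) μ = volume.restrict (Set.Icc (0:ℝ) 1))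
    (ε : ℝ) (hε : ε ∈ Set.Ioo (0:ℝ) 1)
    (hi : Integrable (fun ω => ((Finset.univ.filter (fun y => p ω y > ε)).card : ℝ)) μ)
    (hi' : Integrable (fun ω => (((Finset.univ.filter (fun y => p ω y > ε)).erase (ytrue ω)).card : ℝ)) μ) :
    (∫ ω, ((Finset.univ.filter (fun y => p ω y > ε)).card : ℝ) ∂μ)
      = (∫ ω, (((Finset.univ.filter (fun y => p ω y > ε)).erase (ytrue ω)).card : ℝ) ∂μ)
        + (1 - ε) := by
  set g : Ω → ℝ := fun ω => p ω (ytrue ω) with hg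
  have hgm : AEMeasurable g μ := by
    apply aemeasurable_of_map_neZero
    rw [hunif]
    constructor
    intro h
    have := congrArg (fun m => m (Set.Icc (0:ℝ) 1)) h
    simp [Measure.restrict_apply, Real.volume_Icc] at this
  -- pointwise decomposition
  have hpt : ∀ ω, ((Finset.univ.filter (fun y => p ω y > ε)).card : ℝ)
      = (((Finset.univ.filter (fun y => p ω y > ε)).erase (ytrue ω)).card : ℝ)
        + (if g ω > ε then 1 else 0) := by
    intro ω
    by_cases h : ytrue ω ∈ Finset.univ.filter (fun y => p ω y > ε)
    · have h' : g ω > ε := by simpa using (Finset.mem_filter.mp h).2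
      rw [Finset.card_erase_of_mem h]
      have hc : 1 ≤ (Finset.univ.filter (fun y => p ω y > ε)).card :=
        Finset.card_pos.mpr ⟨_, h⟩
      simp only [if_pos h']
      push_cast [Nat.cast_sub hc]
      ring
    · have h' : ¬ g ω > ε := by simpa using fun hgt => h (Finset.mem_filter.mpr ⟨Finset.mem_univ _, hgt⟩)
      rw [Finset.erase_eq_of_notMem h]
      simp [h']
  have hind : Integrable (fun ω => (if g ω > ε then (1:ℝ) else 0)) μ := by
    have : (fun ω => (if g ω > ε then (1:ℝ) else 0))
        = fun ω => ((Finset.univ.filter (fun y => p ω y > ε)).card : ℝ)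
          - (((Finset.univ.filter (fun y => p ω y > ε)).erase (ytrue ω)).card : ℝ) := by
      funext ω; rw [hpt ω]; ring
    rw [this]; exact hi.sub hi'
  have hsplit : (∫ ω, ((Finset.univ.filter (fun y => p ω y > ε)).card : ℝ) ∂μ)
      = (∫ ω, (((Finset.univ.filter (fun y => p ω y > ε)).erase (ytrue ω)).card : ℝ) ∂μ)
        + ∫ ω, (if g ω > ε then (1:ℝ) else 0) ∂μ := by
    rw [← integral_add hi' hind]
    exact integral_congr_ae (Filter.Eventually.of_forall hpt)
  rw [hsplit]
  congr 1
  -- compute the indicator integral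
  obtain ⟨g', hg'm, hgg'⟩ := hgm
  have hcongr : (fun ω => (if g ω > ε then (1:ℝ) else 0))
      =ᵐ[μ] fun ω => (if g' ω > ε then (1:ℝ) else 0) := by
    filter_upwards [hgg'] with ω h
    rw [h]
  rw [integral_congr_ae hcongr]
  have hset : MeasurableSet (g' ⁻¹' Set.Ioi ε) := hg'm (measurableSet_Ioi)
  have : (fun ω => (if g' ω > ε then (1:ℝ) else 0))
      = Set.indicator (g' ⁻¹' Set.Ioi ε) (fun _ => (1:ℝ)) := by
    funext ω
    by_cases h : g' ω > ε <;> simp [Set.indicator, Set.mem_preimage, h]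
  rw [this, integral_indicator hset]
  simp only [integral_const, smul_eq_mul, mul_one]
  have hmap : μ (g' ⁻¹' Set.Ioi ε) = (Measure.map g μ) (Set.Ioi ε) := by
    rw [Measure.map_congr hgg', Measure.map_apply hg'm measurableSet_Ioi]
  rw [measureReal_def, Measure.restrict_apply_univ, hmap, hunif, Measure.restrict_apply measurableSet_Ioi]
  have : Set.Ioi ε ∩ Set.Icc (0:ℝ) 1 = Set.Ioc ε 1 := by
    ext x
    simp only [Set.mem_inter_iff, Set.mem_Ioi, Set.mem_Icc, Set.mem_Ioc]
    constructor
    · rintro ⟨h1, _, h3⟩; exact ⟨h1, h3⟩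
    · rintro ⟨h1, h2⟩; exact ⟨h1, le_of_lt (lt_of_lt_of_le hε.1 (le_of_lt h1)), h2⟩
  rw [this, Real.volume_Ioc, ENNReal.toReal_ofReal (by linarith [hε.2])]

theorem stmt_5 {Ω Y : Type*} [MeasurableSpace Ω] [Fintype Y] [DecidableEq Y]
    (μ : Measure Ω) [IsProbabilityMeasure μ]
    (ytrue : Ω → Y) (pA pB : Ω → Y → ℝ)
    (hA : ∀ ω y, pA ω y ∈ Set.Icc (0:ℝ) 1)
    (hB : ∀ ω y, pB ω y ∈ Set.Icc (0:ℝ) 1)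
    (hunifA : Measure.map (fun ω => pA ω (ytrue ω)) μ
        = volume.restrict (Set.Icc (0:ℝ) 1))
    (hunifB : Measure.map (fun ω => pB ω (ytrue ω)) μ
        = volume.restrict (Set.Icc (0:ℝ) 1))
    (hiA : ∀ ε : ℝ, Integrable
      (fun ω => ((Finset.univ.filter (fun y => pA ω y > ε)).card : ℝ)) μ)
    (hiB : ∀ ε : ℝ, Integrable
      (fun ω => ((Finset.univ.filter (fun y => pB ω y > ε)).card : ℝ)) μ)
    (hiA' : ∀ ε : ℝ, Integrable
      (fun ω => (((Finset.univ.filter (fun y => pA ω y > ε)).erase (ytrue ω)).card : ℝ)) μ)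
    (hiB' : ∀ ε : ℝ, Integrable
      (fun ω => (((Finset.univ.filter (fun y => pB ω y > ε)).erase (ytrue ω)).card : ℝ)) μ) :
    ∀ ε ∈ Set.Ioo (0:ℝ) 1,
    ((∫ ω, ((Finset.univ.filter (fun y => pA ω y > ε)).card : ℝ) ∂μ)
      = (∫ ω, (((Finset.univ.filter (fun y => pA ω y > ε)).erase (ytrue ω)).card : ℝ) ∂μ)
        + (1 - ε)) ∧
    ((∫ ω, ((Finset.univ.filter (fun y => pA ω y > ε)).card : ℝ) ∂μ
        ≤ ∫ ω, ((Finset.univ.filter (fun y => pB ω y > ε)).card : ℝ) ∂μ) ↔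
      (∫ ω, (((Finset.univ.filter (fun y => pA ω y > ε)).erase (ytrue ω)).card : ℝ) ∂μ
        ≤ ∫ ω, (((Finset.univ.filter (fun y => pB ω y > ε)).erase (ytrue ω)).card : ℝ) ∂μ)) := by
  intro ε hε
  have eA := key_aux μ ytrue pA hunifA ε hε (hiA ε) (hiA' ε)
  have eB := key_aux μ ytrue pB hunifB ε hε (hiB ε) (hiB' ε)
  refine ⟨eA, ?_⟩
  rw [eA, eB]
  constructor <;> intro h <;> linarith
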